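/- Let α ∈ (0,1), β ∈ ℝ with α − β > −1/2, p > 1, μ ∈ (0,1) with μ < (α − β + 1/2)/α and μp(α) > 1. Then the integral H₁ := ∫₀^T t^{−1−αμp} (∫₀^{T−t} (∫_r^{t+r} s^{α−β−1} ds)² dr)^{p/2} dt is finite. -/

import Mathlib

open MeasureTheory Set

/-- The function `χ(t) = ∫₀^{T−t} (∫_r^{t+r} s^{α−β−1} ds)² dr`. -/
noncomputable def chiFun (α β T t : ℝ) : ℝ :=
  ∫ r in Ioo (0 : ℝ) (T - t), (∫ s in Ioo r (t + r), s ^ (α - β - 1)) ^ 2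

lemma inner_sm (c : ℝ) : StronglyMeasurable
    (fun q : ℝ × ℝ => ∫ s in Ioo q.2 (q.1 + q.2), s ^ c) := by
  have h : StronglyMeasurable
      (fun q : ℝ × ℝ => ∫ s, (Ioo q.2 (q.1 + q.2)).indicator (fun s => s ^ c) s) := by
    apply StronglyMeasurable.integral_prod_right'
      (f := fun p : (ℝ × ℝ) × ℝ => (Ioo p.1.2 (p.1.1 + p.1.2)).indicator (fun s => s ^ c) p.2)
    apply Measurable.stronglyMeasurable
    have heq : (fun p : (ℝ × ℝ) × ℝ => (Ioo p.1.2 (p.1.1 + p.1.2)).indicator (fun s => s ^ c) p.2)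
        = fun p => if p.1.2 < p.2 ∧ p.2 < p.1.1 + p.1.2 then p.2 ^ c else 0 := by
      funext p; simp [Set.indicator_apply, Set.mem_Ioo]
    rw [heq]
    refine Measurable.ite ?_ (by fun_prop) measurable_const
    exact (measurableSet_lt measurable_fst.snd measurable_snd).inter
      (measurableSet_lt measurable_snd (measurable_fst.fst.add measurable_fst.snd))
  have heq2 : (fun q : ℝ × ℝ => ∫ s in Ioo q.2 (q.1 + q.2), s ^ c)
      = fun q : ℝ × ℝ => ∫ s, (Ioo q.2 (q.1 + q.2)).indicator (fun s => s ^ c) s := by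
    funext q; rw [integral_indicator measurableSet_Ioo]
  rw [heq2]; exact h

lemma chiFun_sm (α β T : ℝ) : StronglyMeasurable (chiFun α β T) := by
  have hin := inner_sm (α - β - 1)
  have h : StronglyMeasurable (fun t : ℝ =>
      ∫ r, (Ioo (0:ℝ) (T - t)).indicator
        (fun r => (∫ s in Ioo r (t + r), s ^ (α - β - 1)) ^ 2) r) := by
    apply StronglyMeasurable.integral_prod_right'
      (f := fun p : ℝ × ℝ => (Ioo (0:ℝ) (T - p.1)).indicator
        (fun r => (∫ s in Ioo r (p.1 + r), s ^ (α - β - 1)) ^ 2) p.2)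
    apply Measurable.stronglyMeasurable
    have heq : (fun p : ℝ × ℝ => (Ioo (0:ℝ) (T - p.1)).indicator
        (fun r => (∫ s in Ioo r (p.1 + r), s ^ (α - β - 1)) ^ 2) p.2)
        = fun p => if 0 < p.2 ∧ p.2 < T - p.1 then
            (∫ s in Ioo p.2 (p.1 + p.2), s ^ (α - β - 1)) ^ 2 else 0 := by
      funext p; simp [Set.indicator_apply, Set.mem_Ioo]
    rw [heq]
    refine Measurable.ite ?_ ((hin.measurable).pow_const 2) measurable_const
    exact (measurableSet_lt measurable_const measurable_snd).inter
      (measurableSet_lt measurable_snd ((measurable_const.sub measurable_fst)))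
  have heq2 : chiFun α β T = fun t : ℝ =>
      ∫ r, (Ioo (0:ℝ) (T - t)).indicator
        (fun r => (∫ s in Ioo r (t + r), s ^ (α - β - 1)) ^ 2) r := by
    funext t; rw [integral_indicator measurableSet_Ioo]; rfl
  rw [heq2]; exact h

-- integrability of rpow on Ioo with positive left endpoint
lemma rpow_int_Ioo (c a b : ℝ) (ha : 0 < a) :
    IntegrableOn (fun s : ℝ => s ^ c) (Ioo a b) := by
  rcases le_or_gt b a with h | h
  · rw [Ioo_eq_empty (by exact fun hh => absurd hh (not_lt.mpr h))]
    exact integrableOn_empty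
  · have h1 : IntervalIntegrable (fun s : ℝ => s ^ c) volume a b :=
      intervalIntegral.intervalIntegrable_rpow (Or.inr (Set.notMem_uIcc_of_lt ha (ha.trans h)))
    rw [intervalIntegrable_iff_integrableOn_Ioc_of_le h.le] at h1
    exact h1.mono_set Ioo_subset_Ioc_self

-- integral of rpow over Ioo, positive endpoints
lemma rpow_integral_Ioo (c a b : ℝ) (ha : 0 < a) (hab : a ≤ b) (hc : c ≠ -1) :
    ∫ s in Ioo a b, s ^ c = (b ^ (c+1) - a ^ (c+1)) / (c+1) := by
  rw [← integral_Ioc_eq_integral_Ioo, ← intervalIntegral.integral_of_le hab]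
  exact integral_rpow (Or.inr ⟨hc, Set.notMem_uIcc_of_lt ha (lt_of_lt_of_le ha hab)⟩)

lemma rpow_integral_Ioo_zero (c b : ℝ) (hb : 0 ≤ b) (hc : -1 < c) :
    ∫ s in Ioo 0 b, s ^ c = b ^ (c+1) / (c+1) := by
  rw [← integral_Ioc_eq_integral_Ioo, ← intervalIntegral.integral_of_le hb,
    integral_rpow (Or.inl hc), Real.zero_rpow (by linarith : c + 1 ≠ 0)]
  ring

lemma rpow_int_Ioo_zero (c b : ℝ) (hc : -1 < c) :
    IntegrableOn (fun s : ℝ => s ^ c) (Ioo 0 b) := by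
  rcases le_or_gt b 0 with h | h
  · rw [Ioo_eq_empty (by exact fun hh => absurd hh (not_lt.mpr h))]
    exact integrableOn_empty
  · have h1 : IntervalIntegrable (fun s : ℝ => s ^ c) volume 0 b :=
      intervalIntegral.intervalIntegrable_rpow' hc
    rw [intervalIntegrable_iff_integrableOn_Ioc_of_le h.le] at h1
    exact h1.mono_set Ioo_subset_Ioc_self

lemma sq_rpow (x a : ℝ) (hx : 0 < x) : (x ^ a)^2 = x^(2*a) := by
  rw [sq, ← Real.rpow_add hx]; congr 1; ring

lemma split_bound (t A δ C₀ M : ℝ) (ht : 0 < t) (hA : 0 < A)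
    (hδu : δ < 1/2) (hC₀ : 0 < C₀) (hM : 0 ≤ M)
    (F X : ℝ → ℝ) (hXmeas : Measurable X)
    (hX0 : ∀ r ∈ Ioo (0:ℝ) A, 0 ≤ X r)
    (hF0 : ∀ r ∈ Ioo (0:ℝ) A, 0 ≤ F r)
    (hF : ∀ r ∈ Ioo (0:ℝ) A, F r ≤ C₀ * min (X r) (t * r ^ (δ-1)))
    (hXint : IntegrableOn (fun r => (X r)^2) (Ioo 0 A))
    (hX1 : ∫ r in Ioo (0:ℝ) (min t A), (X r)^2 ≤ M * t^(2*δ+1)) :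
    ∫ r in Ioo (0:ℝ) A, (F r)^2 ≤ C₀^2 * (M + 1/(1-2*δ)) * t^(2*δ+1) := by
  have h12 : 0 < 1 - 2*δ := by linarith
  have htp : 0 ≤ t^(2*δ+1) := Real.rpow_nonneg ht.le _
  have hRHS : 0 ≤ C₀^2 * (M + 1/(1-2*δ)) * t^(2*δ+1) := by positivity
  by_cases hFint : IntegrableOn (fun r => (F r)^2) (Ioo 0 A)
  swap
  · rw [integral_undef hFint]; exact hRHS
  set G : ℝ → ℝ := fun r => C₀^2 * (min (X r) (t * r ^ (δ-1)))^2 with hGdef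
  have hGmeas : Measurable G := by
    apply Measurable.const_mul
    exact (hXmeas.min (by fun_prop)).pow_const 2
  have hGbound : ∀ r ∈ Ioo (0:ℝ) A, G r ≤ C₀^2 * (X r)^2 := by
    rintro r hr
    have h1 : 0 ≤ min (X r) (t * r ^ (δ-1)) :=
      le_min (hX0 r hr) (mul_nonneg ht.le (Real.rpow_nonneg hr.1.le _))
    have h2 : min (X r) (t * r ^ (δ-1)) ≤ X r := min_le_left _ _
    exact mul_le_mul_of_nonneg_left (pow_le_pow_left₀ h1 h2 2) (by positivity)
  have hG0 : ∀ r ∈ Ioo (0:ℝ) A, 0 ≤ G r := by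
    rintro r hr; positivity
  have hGint : IntegrableOn G (Ioo 0 A) := by
    refine Integrable.mono' (hXint.const_mul (C₀^2)) (hGmeas.aestronglyMeasurable) ?_
    rw [ae_restrict_iff' measurableSet_Ioo]
    exact ae_of_all _ fun r hr => by
      rw [Real.norm_of_nonneg (hG0 r hr)]; exact hGbound r hr
  have hFG : ∀ r ∈ Ioo (0:ℝ) A, (F r)^2 ≤ G r := by
    rintro r hr
    calc (F r)^2 ≤ (C₀ * min (X r) (t * r ^ (δ-1)))^2 :=
          pow_le_pow_left₀ (hF0 r hr) (hF r hr) 2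
      _ = G r := by rw [hGdef]; ring
  have step1 : ∫ r in Ioo (0:ℝ) A, (F r)^2 ≤ ∫ r in Ioo (0:ℝ) A, G r :=
    setIntegral_mono_on hFint hGint measurableSet_Ioo hFG
  set c := min t A with hc
  have hc0 : 0 < c := lt_min ht hA
  have hcA : c ≤ A := min_le_right _ _
  have hct : c ≤ t := min_le_left _ _
  have hsplit : Ioo (0:ℝ) A = Ioo 0 c ∪ Ico c A := (Ioo_union_Ico_eq_Ioo hc0 hcA).symm
  have hdisj : Disjoint (Ioo (0:ℝ) c) (Ico c A) := by
    rw [Set.disjoint_left]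
    rintro x ⟨_, hx2⟩ ⟨hx3, _⟩
    exact absurd hx3 (not_le.mpr hx2)
  have hsub1 : Ioo (0:ℝ) c ⊆ Ioo 0 A := Ioo_subset_Ioo le_rfl hcA
  have hsub2 : Ico c A ⊆ Ioo (0:ℝ) A := fun x hx => ⟨lt_of_lt_of_le hc0 hx.1, hx.2⟩
  have step2 : ∫ r in Ioo (0:ℝ) A, G r
      = (∫ r in Ioo (0:ℝ) c, G r) + ∫ r in Ico c A, G r := by
    rw [hsplit]
    exact setIntegral_union hdisj measurableSet_Ico (hGint.mono_set hsub1)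
      (hGint.mono_set hsub2)
  -- piece 1
  have hp1 : ∫ r in Ioo (0:ℝ) c, G r ≤ C₀^2 * (M * t^(2*δ+1)) := by
    calc ∫ r in Ioo (0:ℝ) c, G r ≤ ∫ r in Ioo (0:ℝ) c, C₀^2 * (X r)^2 := by
          refine setIntegral_mono_on (hGint.mono_set hsub1)
            ((hXint.mono_set hsub1).const_mul _) measurableSet_Ioo ?_
          exact fun r hr => hGbound r (hsub1 hr)
      _ = C₀^2 * ∫ r in Ioo (0:ℝ) c, (X r)^2 := integral_const_mul _ _
      _ ≤ C₀^2 * (M * t^(2*δ+1)) := by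
          refine mul_le_mul_of_nonneg_left ?_ (by positivity)
          exact hX1
  -- piece 2
  have hp2 : ∫ r in Ico c A, G r ≤ C₀^2 * (t^(2*δ+1) / (1-2*δ)) := by
    have hpt : ∀ r ∈ Ico c A, G r ≤ C₀^2 * t^2 * r^(2*δ-2) := by
      rintro r ⟨hr1, hr2⟩
      have hr0 : 0 < r := lt_of_lt_of_le hc0 hr1
      have h1 : 0 ≤ min (X r) (t * r ^ (δ-1)) :=
        le_min (hX0 r (hsub2 ⟨hr1, hr2⟩)) (mul_nonneg ht.le (Real.rpow_nonneg hr0.le _))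
      have h2 : min (X r) (t * r ^ (δ-1)) ≤ t * r ^ (δ-1) := min_le_right _ _
      have h3 : (min (X r) (t * r ^ (δ-1)))^2 ≤ (t * r ^ (δ-1))^2 :=
        pow_le_pow_left₀ h1 h2 2
      have h4 : (t * r ^ (δ-1))^2 = t^2 * r^(2*δ-2) := by
        rw [mul_pow, sq (r ^ (δ-1)), ← Real.rpow_add hr0]
        ring_nf
      calc G r ≤ C₀^2 * (t * r ^ (δ-1))^2 := mul_le_mul_of_nonneg_left h3 (by positivity)
        _ = C₀^2 * t^2 * r^(2*δ-2) := by rw [h4]; ring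
    have hint2 : IntegrableOn (fun r => C₀^2 * t^2 * r^(2*δ-2)) (Ico c A) := by
      have base : IntegrableOn (fun r : ℝ => C₀^2 * t^2 * r^(2*δ-2)) (Ioo (c/2) A) :=
        (rpow_int_Ioo (2*δ-2) (c/2) A (by linarith)).const_mul _
      exact base.mono_set (fun x hx => ⟨by linarith [hx.1], hx.2⟩)
    have : ∫ r in Ico c A, G r ≤ ∫ r in Ico c A, C₀^2 * t^2 * r^(2*δ-2) :=
      setIntegral_mono_on (hGint.mono_set hsub2) hint2 measurableSet_Ico hpt
    refine this.trans ?_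
    rw [integral_const_mul]
    rcases le_or_gt A t with h | h
    · have hcA' : c = A := min_eq_right h
      rw [hcA', Set.Ico_self, Measure.restrict_empty, integral_zero_measure, mul_zero]
      positivity
    · have hct' : c = t := min_eq_left h.le
      rw [hct', integral_Ico_eq_integral_Ioo,
        rpow_integral_Ioo (2*δ-2) t A ht h.le (by intro hh; linarith)]
      have he : 2*δ-2+1 = 2*δ-1 := by ring
      rw [he]
      have hA' : 0 ≤ A^(2*δ-1) := Real.rpow_nonneg hA.le _
      have heq : (A^(2*δ-1) - t^(2*δ-1)) / (2*δ-1) = (t^(2*δ-1) - A^(2*δ-1)) / (1-2*δ) := by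
        rw [div_eq_div_iff (by linarith : (2*δ-1) ≠ 0) (by linarith : (1-2*δ) ≠ 0)]
        ring
      have hfin : C₀^2 * t^2 * (t^(2*δ-1) / (1-2*δ)) = C₀^2 * ((t^2 * t^(2*δ-1)) / (1-2*δ)) := by
        ring
      have hpow : t^2 * t^(2*δ-1) = t^(2*δ+1) := by
        rw [← Real.rpow_natCast t 2, ← Real.rpow_add ht]
        congr 1
        push_cast
        ring
      calc C₀^2 * t^2 * ((A^(2*δ-1) - t^(2*δ-1)) / (2*δ-1))
          = C₀^2 * t^2 * ((t^(2*δ-1) - A^(2*δ-1)) / (1-2*δ)) := by rw [heq]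
        _ ≤ C₀^2 * t^2 * (t^(2*δ-1) / (1-2*δ)) := by
            gcongr
            linarith [hA']
        _ = C₀^2 * (t^(2*δ+1) / (1-2*δ)) := by rw [hfin, hpow]
  calc ∫ r in Ioo (0:ℝ) A, (F r)^2 ≤ ∫ r in Ioo (0:ℝ) A, G r := step1
    _ = (∫ r in Ioo (0:ℝ) c, G r) + ∫ r in Ico c A, G r := step2
    _ ≤ C₀^2 * (M * t^(2*δ+1)) + C₀^2 * (t^(2*δ+1) / (1-2*δ)) := add_le_add hp1 hp2
    _ = C₀^2 * (M + 1/(1-2*δ)) * t^(2*δ+1) := by ring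

lemma chi_le (α β T : ℝ) (hT : 0 < T) (δ : ℝ) (hδγ : δ ≤ α - β) (hδ0 : δ ≠ 0)
    (hδl : -(1/2) < δ) (hδu : δ < 1/2) :
    ∃ K, 0 < K ∧ ∀ t ∈ Ioo (0:ℝ) T, chiFun α β T t ≤ K * t ^ (2*δ+1) := by
  have hδ2 : 0 < 2*δ+1 := by linarith
  have h12 : 0 < 1 - 2*δ := by linarith
  have hδsq : 0 < δ^2 := by positivity
  have hM1 : (0:ℝ) < max T 1 := lt_of_lt_of_le one_pos (le_max_right _ _)
  set C₀ : ℝ := (max T 1) ^ (α - β - δ) with hC₀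
  have hC₀0 : 0 < C₀ := Real.rpow_pos_of_pos hM1 _
  refine ⟨C₀^2 * (4/δ^2 + 1/((2*δ+1)*δ^2) + 1/(1-2*δ)), by positivity, ?_⟩
  rintro t ⟨ht0, htT⟩
  have hA0 : 0 < T - t := by linarith
  set A := T - t with hA
  set I : ℝ → ℝ := fun r => ∫ s in Ioo r (t + r), s ^ (δ - 1) with hIdef
  set F : ℝ → ℝ := fun r => ∫ s in Ioo r (t + r), s ^ (α - β - 1) with hFdef
  have htpos : ∀ r : ℝ, 0 < r → (0:ℝ) < t + r := fun r hr => by linarith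
  -- formula for I
  have hIeq : ∀ r : ℝ, 0 < r → I r = ((t+r)^δ - r^δ)/δ := by
    intro r hr
    show (∫ s in Ioo r (t + r), s ^ (δ - 1)) = ((t+r)^δ - r^δ)/δ
    rw [rpow_integral_Ioo (δ-1) r (t+r) hr (by linarith) (by intro h; exact hδ0 (by linarith))]
    norm_num
  have hIb1 : ∀ r : ℝ, 0 < r → I r ≤ t * r ^ (δ-1) := by
    intro r hr
    have hmono : I r ≤ ∫ s in Ioo r (t + r), r ^ (δ-1) := by
      refine setIntegral_mono_on (rpow_int_Ioo _ _ _ hr)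
        (integrableOn_const measure_Ioo_lt_top.ne) measurableSet_Ioo ?_
      intro s hs
      exact Real.rpow_le_rpow_of_nonpos hr hs.1.le (by linarith)
    calc I r ≤ ∫ s in Ioo r (t + r), r ^ (δ-1) := hmono
      _ = t * r ^ (δ-1) := by
        rw [setIntegral_const, Real.volume_real_Ioo_of_le (by linarith : r ≤ t + r), smul_eq_mul]
        ring_nf
  have hI_nonneg : ∀ r : ℝ, 0 < r → 0 ≤ I r := by
    intro r hr
    exact setIntegral_nonneg measurableSet_Ioo fun s hs =>
      Real.rpow_nonneg (le_of_lt (hr.trans hs.1)) _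
  have hF_nonneg : ∀ r : ℝ, 0 < r → 0 ≤ F r := by
    intro r hr
    exact setIntegral_nonneg measurableSet_Ioo fun s hs =>
      Real.rpow_nonneg (le_of_lt (hr.trans hs.1)) _
  -- F ≤ C₀ * I on Ioo 0 A
  have hFI : ∀ r ∈ Ioo (0:ℝ) A, F r ≤ C₀ * I r := by
    rintro r ⟨hr0, hrA⟩
    have hle : F r ≤ ∫ s in Ioo r (t + r), C₀ * s ^ (δ-1) := by
      refine setIntegral_mono_on (rpow_int_Ioo _ _ _ hr0)
        ((rpow_int_Ioo (δ-1) r (t+r) hr0).const_mul C₀) measurableSet_Ioo ?_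
      intro s hs
      have hs0 : 0 < s := hr0.trans hs.1
      have hsT : s ≤ max T 1 := by
        have : s ≤ T := by
          have := hs.2; have := hrA; simp only [hA] at *; linarith
        exact this.trans (le_max_left _ _)
      calc s ^ (α - β - 1) = s ^ (δ - 1) * s ^ (α - β - δ) := by
            rw [← Real.rpow_add hs0]; ring_nf
        _ ≤ s ^ (δ - 1) * C₀ := by
            refine mul_le_mul_of_nonneg_left ?_ (Real.rpow_nonneg hs0.le _)
            exact Real.rpow_le_rpow hs0.le hsT (by linarith)
        _ = C₀ * s ^ (δ - 1) := mul_comm _ _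
    rwa [integral_const_mul] at hle
  have hIb2pos : 0 < δ → ∀ r : ℝ, 0 < r → I r ≤ (t+r)^δ/δ := by
    intro hδp r hr
    rw [hIeq r hr]
    have h1 : 0 ≤ r^δ := Real.rpow_nonneg hr.le _
    gcongr
    linarith
  have hIb2neg : δ < 0 → ∀ r : ℝ, 0 < r → I r ≤ r^δ/(-δ) := by
    intro hδn r hr
    rw [hIeq r hr]
    have h1 : 0 ≤ (t+r)^δ := Real.rpow_nonneg (htpos r hr).le _
    have heq : ((t+r)^δ - r^δ)/δ = (r^δ - (t+r)^δ)/(-δ) := by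
      rw [div_eq_div_iff hδ0 (by linarith : -δ ≠ 0)]
      ring
    rw [heq]
    gcongr
    · linarith
    · linarith
  have hchi : chiFun α β T t = ∫ r in Ioo (0:ℝ) A, (F r)^2 := rfl
  rw [hchi]
  rcases hδ0.lt_or_gt with hneg | hpos
  · -- δ < 0
    have hM0 : (0:ℝ) ≤ 1/((2*δ+1)*δ^2) := by positivity
    refine le_trans (split_bound t A δ C₀ (1/((2*δ+1)*δ^2)) ht0 hA0 hδu hC₀0 hM0
      F (fun r => r^δ/(-δ)) (by fun_prop) ?_ ?_ ?_ ?_ ?_) ?_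
    · exact fun r hr => div_nonneg (Real.rpow_nonneg hr.1.le _) (by linarith)
    · exact fun r hr => hF_nonneg r hr.1
    · intro r hr
      refine (hFI r hr).trans (mul_le_mul_of_nonneg_left ?_ hC₀0.le)
      exact le_min (hIb2neg hneg r hr.1) (hIb1 r hr.1)
    · -- integrability of X^2
      have base : IntegrableOn (fun r : ℝ => r^(2*δ) * (1/δ^2)) (Ioo 0 A) :=
        (rpow_int_Ioo_zero (2*δ) A (by linarith)).mul_const _
      refine base.congr_fun ?_ measurableSet_Ioo
      intro r hr
      show r ^ (2*δ) * (1/δ^2) = (r^δ/(-δ))^2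
      rw [div_pow, neg_sq, sq_rpow r δ hr.1]
      ring
    · -- integral bound
      set c := min t A with hcdef
      have hc0 : 0 < c := lt_min ht0 hA0
      have hct : c ≤ t := min_le_left _ _
      have heqon : EqOn (fun r : ℝ => (r^δ/(-δ))^2) (fun r : ℝ => r^(2*δ) * (1/δ^2))
          (Ioo 0 c) := by
        intro r hr
        simp only
        rw [div_pow, neg_sq, sq_rpow r δ hr.1]
        ring
      rw [setIntegral_congr_fun measurableSet_Ioo heqon, integral_mul_const,
        rpow_integral_Ioo_zero (2*δ) c hc0.le (by linarith)]
      have hle : c^(2*δ+1) ≤ t^(2*δ+1) := Real.rpow_le_rpow hc0.le hct (by linarith)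
      calc c^(2*δ+1)/(2*δ+1) * (1/δ^2) = 1/((2*δ+1)*δ^2) * c^(2*δ+1) := by
            field_simp
        _ ≤ 1/((2*δ+1)*δ^2) * t^(2*δ+1) := by gcongr
    · refine mul_le_mul_of_nonneg_right ?_ (Real.rpow_nonneg ht0.le _)
      refine mul_le_mul_of_nonneg_left ?_ (by positivity)
      have : (0:ℝ) < 4/δ^2 := by positivity
      linarith
  · -- 0 < δ
    have hM0 : (0:ℝ) ≤ 4/δ^2 := by positivity
    have h2t : (0:ℝ) < 2*t := by linarith
    refine le_trans (split_bound t A δ C₀ (4/δ^2) ht0 hA0 hδu hC₀0 hM0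
      F (fun _ => (2*t)^δ/δ) measurable_const ?_ ?_ ?_ ?_ ?_) ?_
    · exact fun r hr => div_nonneg (Real.rpow_nonneg h2t.le _) hpos.le
    · exact fun r hr => hF_nonneg r hr.1
    · intro r hr
      obtain ⟨hr0, hrA⟩ := hr
      refine (hFI r ⟨hr0, hrA⟩).trans (mul_le_mul_of_nonneg_left ?_ hC₀0.le)
      refine le_min ?_ (hIb1 r hr0)
      rcases le_or_gt r t with h | h
      · refine (hIb2pos hpos r hr0).trans ?_
        exact (div_le_div_iff_of_pos_right hpos).mpr
          (Real.rpow_le_rpow (by linarith) (by linarith) hpos.le)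
      · refine (hIb1 r hr0).trans ?_
        have s1 : t * r^(δ-1) ≤ t * t^(δ-1) :=
          mul_le_mul_of_nonneg_left
            (Real.rpow_le_rpow_of_nonpos ht0 h.le (by linarith)) ht0.le
        have s2 : t * t^(δ-1) = t^δ := by
          nth_rewrite 1 [← Real.rpow_one t]
          rw [← Real.rpow_add ht0]
          congr 1; ring
        have s3 : t^δ ≤ (2*t)^δ := Real.rpow_le_rpow ht0.le (by linarith) hpos.le
        have s4 : (2*t)^δ ≤ (2*t)^δ/δ := by
          rw [le_div_iff₀ hpos]
          nlinarith [Real.rpow_nonneg h2t.le δ]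
        have s12 : t * r^(δ-1) ≤ t^δ := s2 ▸ s1
        linarith [s12, s3, s4]
    · exact integrableOn_const measure_Ioo_lt_top.ne
    · set c := min t A with hcdef
      have hc0 : 0 < c := lt_min ht0 hA0
      have hct : c ≤ t := min_le_left _ _
      rw [setIntegral_const, Real.volume_real_Ioo_of_le hc0.le, sub_zero,
        smul_eq_mul]
      have e1 : ((2*t)^δ/δ)^2 = (2:ℝ)^(2*δ) * t^(2*δ) / δ^2 := by
        rw [div_pow, sq_rpow _ _ h2t, Real.mul_rpow (by norm_num) ht0.le]
      have e2 : (2:ℝ)^(2*δ) ≤ 2 := by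
        calc (2:ℝ)^(2*δ) ≤ (2:ℝ)^(1:ℝ) :=
              Real.rpow_le_rpow_of_exponent_le one_le_two (by linarith)
          _ = 2 := Real.rpow_one 2
      have e3 : t * t^(2*δ) = t^(2*δ+1) := by
        nth_rewrite 1 [← Real.rpow_one t]
        rw [← Real.rpow_add ht0]
        congr 1; ring
      have htδ : (0:ℝ) ≤ t^(2*δ) := Real.rpow_nonneg ht0.le _
      rw [e1]
      calc c * ((2:ℝ)^(2*δ) * t^(2*δ) / δ^2) ≤ t * ((2:ℝ)^(2*δ) * t^(2*δ) / δ^2) :=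
            mul_le_mul_of_nonneg_right hct (by positivity)
        _ ≤ t * (2 * t^(2*δ) / δ^2) :=
            mul_le_mul_of_nonneg_left
              ((div_le_div_iff_of_pos_right hδsq).mpr (mul_le_mul_of_nonneg_right e2 htδ)) ht0.le
        _ = (2/δ^2) * (t * t^(2*δ)) := by ring
        _ = (2/δ^2) * t^(2*δ+1) := by rw [e3]
        _ ≤ 4/δ^2 * t^(2*δ+1) := by
            have h24 : (2:ℝ)/δ^2 ≤ 4/δ^2 := by
              rw [div_le_div_iff₀ hδsq hδsq]
              nlinarith
            exact mul_le_mul_of_nonneg_right h24 (Real.rpow_nonneg ht0.le _)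
    · refine mul_le_mul_of_nonneg_right ?_ (Real.rpow_nonneg ht0.le _)
      refine mul_le_mul_of_nonneg_left ?_ (by positivity)
      have : (0:ℝ) < 1/((2*δ+1)*δ^2) := by positivity
      linarith

/-- Finiteness of `H₁ = ∫₀^T t^{−1−αμp} χ(t)^{p/2} dt`. -/
theorem H1_finite (α β p μ T : ℝ) (hα : α ∈ Ioo (0 : ℝ) 1)
    (hαβ : -(1 / 2) < α - β) (hp : 1 < p) (hμ : μ ∈ Ioo (0 : ℝ) 1)
    (hμ₂ : μ < (α - β + 1 / 2) / α) (hμ₃ : 1 < α * μ * p) (hT : 0 < T) :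
    IntegrableOn (fun t => t ^ (-1 - α * μ * p) * (chiFun α β T t) ^ (p / 2))
      (Ioo (0 : ℝ) T) := by
  obtain ⟨hα0, hα1⟩ := hα
  obtain ⟨hμ0, hμ1⟩ := hμ
  have hαμ0 : 0 < α * μ := mul_pos hα0 hμ0
  have h1 : α * μ < α - β + 1/2 := by
    have h := mul_lt_mul_of_pos_left hμ₂ hα0
    rwa [mul_div_cancel₀ _ (ne_of_gt hα0)] at h
  have h2 : α * μ < 1 := by nlinarith
  set η := (α*μ + min (α - β + 1/2) 1)/2 with hη
  have hmin : α*μ < min (α - β + 1/2) 1 := lt_min h1 h2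
  have hη1 : α*μ < η := by rw [hη]; linarith
  have hη2 : η < α - β + 1/2 := by
    have := min_le_left (α-β+1/2) 1
    rw [hη]; linarith
  have hη3 : η < 1 := by
    have := min_le_right (α-β+1/2) 1
    rw [hη]; linarith
  have hη0 : 0 < η := lt_trans hαμ0 hη1
  obtain ⟨δ, hδ1, hδ2, hδ0⟩ : ∃ δ:ℝ, η - 1/2 < δ ∧ δ < min (α-β) (1/2) ∧ δ ≠ 0 := by
    have hub : η - 1/2 < min (α-β) (1/2) := lt_min (by linarith) (by linarith)
    rcases lt_or_ge 0 (min (α-β) (1/2)) with h | h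
    · have hmm : max (η-1/2) 0 < min (α-β) (1/2) := max_lt hub h
      refine ⟨(max (η-1/2) 0 + min (α-β) (1/2))/2, ?_, by linarith, ?_⟩
      · linarith [le_max_left (η-1/2) 0]
      · have hgt : 0 < (max (η-1/2) 0 + min (α-β) (1/2))/2 := by
          linarith [le_max_right (η-1/2) 0]
        exact hgt.ne'
    · refine ⟨(η - 1/2 + min (α-β) (1/2))/2, by linarith, by linarith, ?_⟩
      have hlt : (η - 1/2 + min (α-β) (1/2))/2 < min (α-β) (1/2) := by linarith
      exact (lt_of_lt_of_le hlt h).ne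
  have hδγ : δ ≤ α - β := le_of_lt (lt_of_lt_of_le hδ2 (min_le_left _ _))
  have hδu : δ < 1/2 := lt_of_lt_of_le hδ2 (min_le_right _ _)
  have hδl : -(1/2) < δ := by linarith
  obtain ⟨K, hK0, hKχ⟩ := chi_le α β T hT δ hδγ hδ0 hδl hδu
  have hp0 : 0 < p := by linarith
  set e := -1 - α*μ*p + (2*δ+1)*(p/2) with he
  have he1 : -1 < e := by
    have hh : 2*(α*μ)*p < (2*δ+1)*p :=
      mul_lt_mul_of_pos_right (by linarith) hp0
    rw [he]; linarith
  have hgint : IntegrableOn (fun t => K^(p/2) * t ^ e) (Ioo (0:ℝ) T) := by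
    have h := intervalIntegral.intervalIntegrable_rpow' (a:=0) (b:=T) he1
    rw [intervalIntegrable_iff_integrableOn_Ioc_of_le hT.le] at h
    exact (h.mono_set Ioo_subset_Ioc_self).const_mul _
  have hchi_meas : Measurable (chiFun α β T) := (chiFun_sm α β T).measurable
  have hfmeas : Measurable (fun t => t ^ (-1 - α*μ*p) * (chiFun α β T t) ^ (p/2)) := by
    fun_prop
  refine Integrable.mono' hgint hfmeas.aestronglyMeasurable ?_
  rw [ae_restrict_iff' measurableSet_Ioo]
  refine ae_of_all _ fun t ht => ?_
  obtain ⟨ht0, htT⟩ := ht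
  have hχ0 : 0 ≤ chiFun α β T t :=
    setIntegral_nonneg measurableSet_Ioo fun r _ => sq_nonneg _
  have hf0 : 0 ≤ t ^ (-1 - α*μ*p) * (chiFun α β T t)^(p/2) :=
    mul_nonneg (Real.rpow_nonneg ht0.le _) (Real.rpow_nonneg hχ0 _)
  rw [Real.norm_of_nonneg hf0]
  have hb : (chiFun α β T t)^(p/2) ≤ (K * t^(2*δ+1))^(p/2) :=
    Real.rpow_le_rpow hχ0 (hKχ t ⟨ht0, htT⟩) (by positivity)
  have hexp : (K * t^(2*δ+1))^(p/2) = K^(p/2) * t^((2*δ+1)*(p/2)) := by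
    rw [Real.mul_rpow hK0.le (Real.rpow_nonneg ht0.le _), ← Real.rpow_mul ht0.le]
  have hsum : t^(-1 - α*μ*p) * t^((2*δ+1)*(p/2)) = t^e := by
    rw [← Real.rpow_add ht0, he]
  calc t^(-1 - α*μ*p) * (chiFun α β T t)^(p/2)
      ≤ t^(-1 - α*μ*p) * (K^(p/2) * t^((2*δ+1)*(p/2))) := by
        rw [← hexp]
        exact mul_le_mul_of_nonneg_left hb (Real.rpow_nonneg ht0.le _)
    _ = K^(p/2) * t^e := by rw [← hsum]; ring
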